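/- Let n be a positive perfect square and set Q = [n^{1/2}, 0, −n^{1/2}], viewed as the real symmetric matrix (n^{1/2}, 0; 0, −n^{1/2}). For θ ∈ [0, 2π) and t ∈ ℝ let k(θ) = (cos(θ/2), −sin(θ/2); sin(θ/2), cos(θ/2)) and a(t) = (e^{t/2}, 0; 0, e^{−t/2}), and let g·Q := gQgᵀ denote the congruence action on real binary quadratic forms (identified with real symmetric 2×2 matrices (a, b/2; b/2, c)). Let Q₁ = [n^{1/2}, 0, 0] (the highest-weight component of Q), define the norm ‖[a,b,c]‖ = max(|a|, |b|/3, |c|) on real forms, let F_T = {[a,b,c] : |a| ≤ T, |c| ≤ T, a > c, b ≥ 0} (real forms), and let Θ = {θ ∈ [0, 2π) : k(θ)·Q₁ ∈ ⋃_{r ≥ 0} r·F_1}. Then, as T → ∞, ∬_{{(θ,t) : (k(θ)a(t))·Q ∈ F_T}} (cosh t)/4 dθ dt ∼ (T/4)·∫_{Θ} ‖k(θ)·Q₁‖^{−1} dθ; that is, the ratio of the two sides tends to 1. -/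

import Mathlib

open Filter Real MeasureTheory Matrix

/-- `k(θ) = (cos(θ/2), -sin(θ/2); sin(θ/2), cos(θ/2))`. -/
noncomputable def kRot (θ : ℝ) : Matrix (Fin 2) (Fin 2) ℝ :=
  !![Real.cos (θ / 2), -Real.sin (θ / 2); Real.sin (θ / 2), Real.cos (θ / 2)]

/-- `a(t) = (e^{t/2}, 0; 0, e^{-t/2})`. -/
noncomputable def aDiag (t : ℝ) : Matrix (Fin 2) (Fin 2) ℝ :=
  !![Real.exp (t / 2), 0; 0, Real.exp (-t / 2)]

/-- The congruence action `g · Q = g Q gᵀ` on real binary quadratic forms, identified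
with real symmetric `2 × 2` matrices `(a, b/2; b/2, c)`. -/
def congrAct (g M : Matrix (Fin 2) (Fin 2) ℝ) : Matrix (Fin 2) (Fin 2) ℝ :=
  g * M * gᵀ

/-- The norm `‖[a,b,c]‖ = max(|a|, |b|/3, |c|)` on real binary quadratic forms,
written in terms of the associated symmetric matrix (`b = 2 M₀₁`). -/
noncomputable def formNorm (M : Matrix (Fin 2) (Fin 2) ℝ) : ℝ :=
  max |M 0 0| (max (|2 * M 0 1| / 3) |M 1 1|)

/-- The region `F_T = {[a,b,c] : |a| ≤ T, |c| ≤ T, a > c, b ≥ 0}` of real binary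
quadratic forms, written in terms of the associated symmetric matrices. -/
def FTregion (T : ℝ) : Set (Matrix (Fin 2) (Fin 2) ℝ) :=
  {M | |M 0 0| ≤ T ∧ |M 1 1| ≤ T ∧ M 1 1 < M 0 0 ∧ 0 ≤ M 0 1}

/-! ### Auxiliary material -/

/-- The half-width (in the `u = sinh t` variable) of the `t`-interval where the
rotated-boosted form stays in the box of size `S`. -/
noncomputable def u0 (k S : ℝ) : ℝ :=
  (S^2 - k^2) / (S + k * Real.sqrt (S^2 + 1 - k^2))

section u0lem
variable {k S : ℝ}

lemma R_sq (hk0 : 0 ≤ k) (hk1 : k ≤ 1) (hS : 1 ≤ S) :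
    Real.sqrt (S^2 + 1 - k^2) ^ 2 = S^2 + 1 - k^2 :=
  Real.sq_sqrt (by nlinarith [sq_nonneg (S-1), sq_nonneg (1-k)])

lemma den_pos (hk0 : 0 ≤ k) (hk1 : k ≤ 1) (hS : 1 ≤ S) :
    0 < S + k * Real.sqrt (S^2 + 1 - k^2) := by
  have := Real.sqrt_nonneg (S^2 + 1 - k^2)
  nlinarith

lemma u0_nonneg (hk0 : 0 ≤ k) (hk1 : k ≤ 1) (hS : 1 ≤ S) : 0 ≤ u0 k S := by
  apply div_nonneg (by nlinarith [sq_nonneg (S-1), sq_nonneg (1-k)]) (den_pos hk0 hk1 hS).le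

lemma u0_le (hk0 : 0 ≤ k) (hk1 : k ≤ 1) (hS : 1 ≤ S) : u0 k S ≤ S := by
  rw [u0, div_le_iff₀ (den_pos hk0 hk1 hS)]
  have h1 := Real.sqrt_nonneg (S^2 + 1 - k^2)
  nlinarith [mul_nonneg (mul_nonneg (le_trans zero_le_one hS) hk0) h1, sq_nonneg k]

lemma u0_root (hk0 : 0 ≤ k) (hk1 : k ≤ 1) (hS : 1 ≤ S) :
    k * Real.sqrt (1 + u0 k S ^ 2) = S - u0 k S := by
  have hR := R_sq hk0 hk1 hS
  have hD := den_pos hk0 hk1 hS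
  have hu_le : u0 k S ≤ S := u0_le hk0 hk1 hS
  have hsq : k^2 * (1 + u0 k S ^ 2) = (S - u0 k S)^2 := by
    rw [u0]
    field_simp
    linear_combination (k^2*(k^2 - S^2)) * hR
  have key : (k * Real.sqrt (1 + u0 k S ^ 2))^2 = (S - u0 k S)^2 := by
    rw [mul_pow, Real.sq_sqrt (by positivity)]; exact hsq
  have h2 : |k * Real.sqrt (1 + u0 k S ^ 2)| = |S - u0 k S| := by
    rw [← Real.sqrt_sq_eq_abs, ← Real.sqrt_sq_eq_abs, key]
  rwa [abs_of_nonneg (by positivity), abs_of_nonneg (by linarith)] at h2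

lemma f_strictMono (hk0 : 0 ≤ k) (hk1 : k ≤ 1) :
    StrictMono (fun x : ℝ => x + k * Real.sqrt (1 + x^2)) := by
  intro x y hxy
  simp only
  set a := Real.sqrt (1 + x^2) with ha
  set b := Real.sqrt (1 + y^2) with hb
  have hax : |x| < a := by
    rw [ha, ← Real.sqrt_sq_eq_abs]; exact Real.sqrt_lt_sqrt (sq_nonneg x) (by linarith)
  have hay : |y| < b := by
    rw [hb, ← Real.sqrt_sq_eq_abs]; exact Real.sqrt_lt_sqrt (sq_nonneg y) (by linarith)
  have hx1 : -a < x := by cases abs_lt.1 hax with | intro h1 h2 => linarith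
  have hy1 : -b < y := by cases abs_lt.1 hay with | intro h1 h2 => linarith
  have hsx : a ^ 2 = 1 + x^2 := Real.sq_sqrt (by positivity)
  have hsy : b ^ 2 = 1 + y^2 := Real.sq_sqrt (by positivity)
  have h5 : (a - b) * (a + b) = (x - y) * (x + y) := by linear_combination hsx - hsy
  have hab : 0 < a + b := by positivity
  rcases le_or_gt a b with h | h
  · nlinarith [mul_le_mul_of_nonneg_left h hk0]
  · have h6 : 0 < (y - x) * (a + b + x + y) := by
      apply mul_pos (by linarith); linarith
    have h7 : a - b < y - x := by nlinarith
    nlinarith [mul_le_mul_of_nonneg_right hk1 (by linarith : (0:ℝ) ≤ a - b)]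

lemma claimA (hk0 : 0 ≤ k) (hk1 : k ≤ 1) (hS : 1 ≤ S) (x : ℝ) :
    x + k * Real.sqrt (1 + x^2) ≤ S ↔ x ≤ u0 k S := by
  have hroot : u0 k S + k * Real.sqrt (1 + u0 k S ^ 2) = S := by
    have := u0_root hk0 hk1 hS; linarith
  constructor
  · intro h
    by_contra hlt
    push_neg at hlt
    have := f_strictMono hk0 hk1 hlt
    simp only at this
    rw [hroot] at this
    linarith
  · intro h
    calc x + k * Real.sqrt (1 + x^2) ≤ u0 k S + k * Real.sqrt (1 + u0 k S ^2) := by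
          have := (f_strictMono hk0 hk1).monotone h; simpa using this
      _ = S := hroot

lemma t_cond (hk0 : 0 ≤ k) (hk1 : k ≤ 1) (hS : 1 ≤ S) (t : ℝ) :
    (|Real.sinh t + k * Real.cosh t| ≤ S ∧ |Real.sinh t - k * Real.cosh t| ≤ S) ↔
      |Real.sinh t| ≤ u0 k S := by
  have hcosh : Real.cosh t = Real.sqrt (1 + Real.sinh t ^ 2) := by
    rw [show (1 : ℝ) + Real.sinh t ^2 = Real.cosh t ^2 by rw [Real.cosh_sq]; ring,
      Real.sqrt_sq (Real.cosh_pos t).le]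
  have hkc : 0 ≤ k * Real.cosh t := mul_nonneg hk0 (Real.cosh_pos t).le
  have e1 : Real.sinh t + k * Real.cosh t ≤ S ↔ Real.sinh t ≤ u0 k S := by
    rw [hcosh]; exact claimA hk0 hk1 hS _
  have e2 : -Real.sinh t + k * Real.cosh t ≤ S ↔ -Real.sinh t ≤ u0 k S := by
    rw [hcosh, show (1:ℝ) + Real.sinh t ^ 2 = 1 + (-Real.sinh t)^2 by ring]
    exact claimA hk0 hk1 hS _
  rw [abs_le, abs_le, abs_le]
  constructor
  · rintro ⟨⟨h1, h2⟩, ⟨h3, h4⟩⟩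
    exact ⟨by have := e2.1 (by linarith); linarith, e1.1 h2⟩
  · rintro ⟨h1, h2⟩
    have g1 := e1.2 h2
    have g2 := e2.2 (by linarith)
    exact ⟨⟨by linarith, g1⟩, ⟨by linarith, by linarith⟩⟩

lemma u0_div_S_eq (hk0 : 0 ≤ k) (hS : 1 ≤ S) :
    u0 k S / S = (1 - (k/S)^2) / (1 + k * Real.sqrt (1 + (1-k^2) * (1/S^2))) := by
  have hS0 : 0 < S := by linarith
  have hsqrt : Real.sqrt (S^2 + 1 - k^2) = S * Real.sqrt (1 + (1-k^2) * (1/S^2)) := by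
    rw [← Real.sqrt_sq hS0.le, ← Real.sqrt_mul (sq_nonneg S)]
    rw [Real.sqrt_sq hS0.le]
    congr 1
    have : S^2 ≠ 0 := by positivity
    field_simp
    ring
  have hd1 : 0 < 1 + k * Real.sqrt (1 + (1-k^2) * (1/S^2)) := by
    have := Real.sqrt_nonneg (1 + (1-k^2) * (1/S^2))
    nlinarith
  have hd2 : 0 < S + k * Real.sqrt (S^2 + 1 - k^2) := by
    rw [hsqrt]
    have := Real.sqrt_nonneg (1 + (1-k^2) * (1/S^2))
    nlinarith
  rw [u0, hsqrt]
  field_simp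

lemma tendsto_u0_div (hk0 : 0 ≤ k) (hk1 : k ≤ 1) :
    Filter.Tendsto (fun S : ℝ => u0 k S / S) Filter.atTop (nhds ((1+k)⁻¹)) := by
  have hnum : Filter.Tendsto (fun S : ℝ => 1 - (k/S)^2) Filter.atTop (nhds 1) := by
    have h1 : Filter.Tendsto (fun S : ℝ => k/S) Filter.atTop (nhds 0) :=
      Filter.Tendsto.div_atTop tendsto_const_nhds Filter.tendsto_id
    have h2 := (h1.pow 2)
    have h3 := Filter.Tendsto.sub
      (tendsto_const_nhds : Filter.Tendsto (fun _ : ℝ => (1:ℝ)) Filter.atTop (nhds 1)) h2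
    simpa using h3
  have hden : Filter.Tendsto (fun S : ℝ => 1 + k * Real.sqrt (1 + (1-k^2) * (1/S^2)))
      Filter.atTop (nhds (1 + k)) := by
    have h1 : Filter.Tendsto (fun S : ℝ => 1/S^2) Filter.atTop (nhds 0) :=
      Filter.Tendsto.div_atTop tendsto_const_nhds (Filter.tendsto_pow_atTop two_ne_zero)
    have h2 : Filter.Tendsto (fun S : ℝ => 1 + (1-k^2) * (1/S^2)) Filter.atTop (nhds 1) := by
      have h4 := Filter.Tendsto.add
        (tendsto_const_nhds : Filter.Tendsto (fun _ : ℝ => (1:ℝ)) Filter.atTop (nhds 1))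
        (Filter.Tendsto.mul
          (tendsto_const_nhds : Filter.Tendsto (fun _ : ℝ => 1 - k^2) Filter.atTop (nhds (1 - k^2))) h1)
      simpa using h4
    have h3 : Filter.Tendsto (fun S : ℝ => Real.sqrt (1 + (1-k^2) * (1/S^2)))
        Filter.atTop (nhds 1) := by
      have := (Real.continuous_sqrt.tendsto 1).comp h2
      simpa [Function.comp_def] using this
    have h4 := Filter.Tendsto.add
      (tendsto_const_nhds : Filter.Tendsto (fun _ : ℝ => (1:ℝ)) Filter.atTop (nhds 1))
      (Filter.Tendsto.mul
        (tendsto_const_nhds : Filter.Tendsto (fun _ : ℝ => k) Filter.atTop (nhds k)) h3)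
    simpa using h4
  have hne : (1 : ℝ) + k ≠ 0 := by linarith
  have hdiv := hnum.div hden hne
  rw [show (1:ℝ)/(1+k) = (1+k)⁻¹ by rw [one_div]] at hdiv
  apply hdiv.congr'
  filter_upwards [Filter.eventually_ge_atTop (1:ℝ)] with S hS
  rw [u0_div_S_eq hk0 hS]
  rfl

end u0lem

/-! ### Matrix entry computations -/

section entries
variable (q θ t : ℝ)

private lemma hcth : Real.cos θ = 2 * Real.cos (θ/2)^2 - 1 := by
  rw [← Real.cos_two_mul]; ring_nf
private lemma hsth : Real.sin θ = 2 * Real.sin (θ/2) * Real.cos (θ/2) := by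
  rw [← Real.sin_two_mul]; ring_nf
private lemma hEt : Real.exp t = Real.exp (t / 2) * Real.exp (t / 2) := by
  rw [← Real.exp_add]; ring_nf
private lemma hFt : Real.exp (-t) = Real.exp (-t / 2) * Real.exp (-t / 2) := by
  rw [← Real.exp_add]; ring_nf

lemma entry00 :
    congrAct (kRot θ * aDiag t) !![q, 0; 0, -q] 0 0
      = q * (Real.sinh t + Real.cos θ * Real.cosh t) := by
  simp only [congrAct, kRot, aDiag, Matrix.mul_apply, Fin.sum_univ_two, Real.sinh_eq,
    Real.cosh_eq, Matrix.transpose_apply, Matrix.cons_val', Matrix.cons_val_zero,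
    Matrix.cons_val_one, Matrix.head_cons, Matrix.head_fin_const, Matrix.empty_val',
    Matrix.cons_val_fin_one, Matrix.vecHead, Matrix.vecTail, Matrix.of_apply]
  rw [hcth θ, hEt t, hFt t]
  linear_combination (-q * Real.exp (-t/2)^2) * Real.sin_sq_add_cos_sq (θ/2)

lemma entry01 :
    congrAct (kRot θ * aDiag t) !![q, 0; 0, -q] 0 1
      = q * Real.sin θ * Real.cosh t := by
  simp only [congrAct, kRot, aDiag, Matrix.mul_apply, Fin.sum_univ_two, Real.sinh_eq,
    Real.cosh_eq, Matrix.transpose_apply, Matrix.cons_val', Matrix.cons_val_zero,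
    Matrix.cons_val_one, Matrix.head_cons, Matrix.head_fin_const, Matrix.empty_val',
    Matrix.cons_val_fin_one, Matrix.vecHead, Matrix.vecTail, Matrix.of_apply]
  rw [hsth θ, hEt t, hFt t]
  ring

lemma entry11 :
    congrAct (kRot θ * aDiag t) !![q, 0; 0, -q] 1 1
      = q * (Real.sinh t - Real.cos θ * Real.cosh t) := by
  simp only [congrAct, kRot, aDiag, Matrix.mul_apply, Fin.sum_univ_two, Real.sinh_eq,
    Real.cosh_eq, Matrix.transpose_apply, Matrix.cons_val', Matrix.cons_val_zero,
    Matrix.cons_val_one, Matrix.head_cons, Matrix.head_fin_const, Matrix.empty_val',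
    Matrix.cons_val_fin_one, Matrix.vecHead, Matrix.vecTail, Matrix.of_apply]
  rw [hcth θ, hEt t, hFt t]
  linear_combination (q * Real.exp (t/2)^2) * Real.sin_sq_add_cos_sq (θ/2)

lemma kQ1_eq : congrAct (kRot θ) !![q, 0; 0, 0]
    = q • !![Real.cos (θ/2)^2, Real.sin (θ/2) * Real.cos (θ/2);
             Real.sin (θ/2) * Real.cos (θ/2), Real.sin (θ/2)^2] := by
  ext i j
  fin_cases i <;> fin_cases j <;>
    · simp [congrAct, kRot, Matrix.mul_apply, Fin.sum_univ_two, Matrix.vecHead, Matrix.vecTail]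
      ring

end entries

/-! ### The angular window -/

lemma window (θ : ℝ) : (θ ∈ Set.Ico 0 (2*π) ∧ 0 < Real.cos θ ∧ 0 ≤ Real.sin θ) ↔
    θ ∈ Set.Ico 0 (π/2) := by
  have hpi := Real.pi_pos
  constructor
  · rintro ⟨⟨h0, h2⟩, hc, hs⟩
    refine ⟨h0, ?_⟩
    by_contra hlt
    push_neg at hlt
    rcases le_or_gt θ (π + π/2) with h | h
    · exact absurd (Real.cos_nonpos_of_pi_div_two_le_of_le hlt h) (by linarith)
    · have h1 : Real.sin (θ - 2*π) < 0 :=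
        Real.sin_neg_of_neg_of_neg_pi_lt (by linarith) (by linarith)
      rw [Real.sin_sub_two_pi] at h1
      linarith
  · rintro ⟨h0, h1⟩
    exact ⟨⟨h0, by linarith⟩, Real.cos_pos_of_mem_Ioo ⟨by linarith, h1⟩,
      Real.sin_nonneg_of_nonneg_of_le_pi h0 (by linarith)⟩

lemma cos_window {θ : ℝ} (hθ : θ ∈ Set.Ico 0 (π/2)) : 0 ≤ Real.cos θ ∧ Real.cos θ ≤ 1 := by
  obtain ⟨h0, h1⟩ := hθ
  exact ⟨Real.cos_nonneg_of_mem_Icc ⟨by linarith [Real.pi_pos], h1.le⟩, Real.cos_le_one θ⟩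

lemma half_facts {θ : ℝ} (hθ : θ ∈ Set.Ico 0 (π/2)) :
    0 ≤ Real.sin (θ/2) ∧ Real.sin (θ/2) < Real.cos (θ/2) := by
  obtain ⟨h0, h1⟩ := hθ
  have hpi := Real.pi_pos
  constructor
  · exact Real.sin_nonneg_of_nonneg_of_le_pi (by linarith) (by linarith)
  · rw [← Real.cos_pi_div_two_sub]
    apply Real.cos_lt_cos_of_nonneg_of_le_pi (by linarith) (by linarith) (by linarith)

/-! ### The region in `(θ, t)` coordinates -/

lemma set_eq (q T : ℝ) (hq : 0 < q) (hT : 1 ≤ T / q) :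
    {p : ℝ × ℝ | p.1 ∈ Set.Ico 0 (2 * π) ∧
        congrAct (kRot p.1 * aDiag p.2) !![q, 0; 0, -q] ∈ FTregion T}
      = {p : ℝ × ℝ | p.1 ∈ Set.Ico 0 (π/2) ∧ |Real.sinh p.2| ≤ u0 (Real.cos p.1) (T/q)} := by
  ext ⟨θ, t⟩
  simp only [Set.mem_setOf_eq, FTregion, entry00, entry01, entry11]
  have hch := Real.cosh_pos t
  have habs : ∀ X : ℝ, |q * X| ≤ T ↔ |X| ≤ T / q := by
    intro X
    rw [abs_mul, abs_of_pos hq, le_div_iff₀ hq, mul_comm]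
  constructor
  · rintro ⟨hw, h1, h2, h3, h4⟩
    have hc : 0 < Real.cos θ := by nlinarith [mul_pos hq hch, h3]
    have hs : 0 ≤ Real.sin θ := by nlinarith [mul_pos hq hch, h4]
    refine ⟨(window θ).1 ⟨hw, hc, hs⟩, ?_⟩
    exact (t_cond hc.le (Real.cos_le_one θ) hT t).1 ⟨(habs _).1 h1, (habs _).1 h2⟩
  · rintro ⟨hw, h5⟩
    obtain ⟨hw2, hc, hs⟩ := (window θ).2 hw
    have := (t_cond hc.le (Real.cos_le_one θ) hT t).2 h5
    refine ⟨hw2, (habs _).2 this.1, (habs _).2 this.2,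
      by nlinarith [mul_pos (mul_pos hq hc) hch], mul_nonneg (mul_nonneg hq.le hs) hch.le⟩

/-! ### Fubini computation of the numerator -/

lemma measurable_u0cos (S : ℝ) : Measurable fun θ : ℝ => u0 (Real.cos θ) S := by
  unfold u0
  apply Measurable.div
  · fun_prop
  · apply Measurable.add measurable_const
    apply Measurable.mul (by fun_prop)
    apply (Real.continuous_sqrt.measurable).comp
    fun_prop

lemma N_eq (S : ℝ) (hS : 1 ≤ S) :
    ∫ p in {p : ℝ × ℝ | p.1 ∈ Set.Ico 0 (π/2) ∧ |Real.sinh p.2| ≤ u0 (Real.cos p.1) S},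
      Real.cosh p.2 / 4
      = ∫ θ in Set.Ico 0 (π/2), u0 (Real.cos θ) S / 2 := by
  set E : Set (ℝ × ℝ) :=
    {p | p.1 ∈ Set.Ico 0 (π/2) ∧ |Real.sinh p.2| ≤ u0 (Real.cos p.1) S} with hEdef
  set g : ℝ × ℝ → ℝ := fun p => Real.cosh p.2 / 4 with hgdef
  have hE : MeasurableSet E := by
    apply MeasurableSet.inter
    · exact (measurableSet_Ico.preimage measurable_fst)
    · exact measurableSet_le (by fun_prop) ((measurable_u0cos S).comp measurable_fst)
  have hslice : ∀ θ t : ℝ, θ ∈ Set.Ico 0 (π/2) →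
      (|Real.sinh t| ≤ u0 (Real.cos θ) S ↔
        t ∈ Set.Icc (-(Real.arsinh (u0 (Real.cos θ) S))) (Real.arsinh (u0 (Real.cos θ) S))) := by
    intro θ t _
    rw [abs_le, Set.mem_Icc]
    constructor
    · rintro ⟨h1, h2⟩
      constructor
      · have := Real.arsinh_le_arsinh.2 h1
        rwa [Real.arsinh_neg, Real.arsinh_sinh] at this
      · rw [← Real.arsinh_sinh t]; exact Real.arsinh_le_arsinh.2 h2
    · rintro ⟨h1, h2⟩
      have g2 : Real.sinh t ≤ u0 (Real.cos θ) S := by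
        rw [← Real.sinh_arsinh (u0 (Real.cos θ) S)]; exact Real.sinh_le_sinh.2 h2
      have g1 : -(u0 (Real.cos θ) S) ≤ Real.sinh t := by
        rw [← Real.sinh_arsinh (u0 (Real.cos θ) S), ← Real.sinh_neg]
        exact Real.sinh_le_sinh.2 h1
      exact ⟨g1, g2⟩
  have hcos : ∀ θ : ℝ, θ ∈ Set.Ico 0 (π/2) → 0 ≤ Real.cos θ ∧ Real.cos θ ≤ 1 :=
    fun θ hθ => cos_window hθ
  have hEK : E ⊆ Set.Icc 0 (π/2) ×ˢ Set.Icc (-(Real.arsinh S)) (Real.arsinh S) := by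
    rintro ⟨θ, t⟩ ⟨h1, h2⟩
    have hc := hcos θ h1
    have hle : u0 (Real.cos θ) S ≤ S := u0_le hc.1 hc.2 hS
    have h3 : |Real.sinh t| ≤ S := le_trans h2 hle
    rw [abs_le] at h3
    constructor
    · exact ⟨h1.1, h1.2.le⟩
    · constructor
      · have := Real.arsinh_le_arsinh.2 h3.1
        rwa [Real.arsinh_neg, Real.arsinh_sinh] at this
      · rw [← Real.arsinh_sinh t]; exact Real.arsinh_le_arsinh.2 h3.2
  have hint : Integrable (E.indicator g) (volume : Measure (ℝ × ℝ)) := by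
    apply IntegrableOn.integrable_indicator _ hE
    apply IntegrableOn.mono_set _ hEK
    exact ((Real.continuous_cosh.comp continuous_snd).div_const 4).continuousOn.integrableOn_compact
      (isCompact_Icc.prod isCompact_Icc)
  rw [← integral_indicator hE, Measure.volume_eq_prod,
    integral_prod _ (by rwa [← Measure.volume_eq_prod])]
  have hinner : ∀ x : ℝ, (∫ y : ℝ, E.indicator g (x, y)) =
      (Set.Ico 0 (π/2)).indicator (fun θ => u0 (Real.cos θ) S / 2) x := by
    intro x
    by_cases hx : x ∈ Set.Ico 0 (π/2)
    · have hc := hcos x hx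
      set u := u0 (Real.cos x) S with hu
      set τ := Real.arsinh u with hτ
      have hun : 0 ≤ u := u0_nonneg hc.1 hc.2 hS
      have hτn : 0 ≤ τ := by
        rw [hτ, ← Real.arsinh_zero]; exact Real.arsinh_le_arsinh.2 hun
      have h1 : (fun y : ℝ => E.indicator g (x, y)) =
          (Set.Icc (-τ) τ).indicator (fun y => Real.cosh y / 4) := by
        funext y
        by_cases hy : y ∈ Set.Icc (-τ) τ
        · rw [Set.indicator_of_mem hy]
          have : (x, y) ∈ E := ⟨hx, (hslice x y hx).2 hy⟩
          rw [Set.indicator_of_mem this]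
        · rw [Set.indicator_of_notMem hy]
          have : (x, y) ∉ E := by
            intro hmem
            exact hy ((hslice x y hx).1 hmem.2)
          rw [Set.indicator_of_notMem this]
      rw [h1, integral_indicator measurableSet_Icc, Set.indicator_of_mem hx]
      rw [integral_Icc_eq_integral_Ioc, ← intervalIntegral.integral_of_le (by linarith)]
      rw [intervalIntegral.integral_eq_sub_of_hasDerivAt
        (f := fun y => Real.sinh y / 4)
        (fun y _ => (Real.hasDerivAt_sinh y).div_const 4)
        ((Real.continuous_cosh.div_const 4).intervalIntegrable _ _)]
      rw [Real.sinh_neg, Real.sinh_arsinh]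
      ring
    · have h1 : (fun y : ℝ => E.indicator g (x, y)) = fun _ => 0 := by
        funext y
        apply Set.indicator_of_notMem
        intro hmem
        exact hx hmem.1
      rw [h1, Set.indicator_of_notMem hx, integral_zero]
  rw [funext hinner, integral_indicator measurableSet_Ico]

/-! ### The `Θ` set and the norm of the highest-weight component -/

lemma theta_set_eq (q : ℝ) (hq : 0 < q) :
    {θ : ℝ | θ ∈ Set.Ico 0 (2 * π) ∧
        ∃ r : ℝ, 0 ≤ r ∧ ∃ M ∈ FTregion 1, congrAct (kRot θ) !![q, 0; 0, 0] = r • M}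
      = Set.Ico 0 (π/2) := by
  ext θ
  simp only [Set.mem_setOf_eq]
  set c := Real.cos (θ/2) with hc
  set s := Real.sin (θ/2) with hs
  have hcs : s^2 + c^2 = 1 := Real.sin_sq_add_cos_sq _
  have hcosθ : Real.cos θ = c^2 - s^2 := by
    have h2 := Real.cos_two_mul (θ/2)
    rw [show 2 * (θ/2) = θ by ring] at h2
    rw [h2]; linarith
  have hsinθ : Real.sin θ = 2 * s * c := by
    have h2 := Real.sin_two_mul (θ/2)
    rw [show 2 * (θ/2) = θ by ring] at h2
    rw [h2]
  constructor
  · rintro ⟨hw, r, hr, M, hM, heq⟩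
    rw [kQ1_eq] at heq
    have e00 : q * c^2 = r * M 0 0 := by
      have := congrFun (congrFun heq 0) 0; simpa using this
    have e01 : q * (s * c) = r * M 0 1 := by
      have := congrFun (congrFun heq 0) 1; simpa using this
    have e11 : q * s^2 = r * M 1 1 := by
      have := congrFun (congrFun heq 1) 1; simpa using this
    rcases eq_or_lt_of_le hr with h0 | h0
    · exfalso
      rw [← h0] at e00 e11
      simp at e00 e11
      rcases e00 with e00 | e00 <;> rcases e11 with e11 | e11 <;> nlinarith
    · obtain ⟨_, _, hlt, hpos⟩ := hM
      apply (window θ).1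
      refine ⟨hw, ?_, ?_⟩
      · rw [hcosθ]
        have : r * M 1 1 < r * M 0 0 := by exact mul_lt_mul_of_pos_left hlt h0
        nlinarith
      · rw [hsinθ]
        have : 0 ≤ r * M 0 1 := mul_nonneg h0.le hpos
        nlinarith
  · intro hθ
    obtain ⟨hs0, hsc⟩ := half_facts hθ
    have hc0 : 0 < c := lt_of_le_of_lt hs0 hsc
    obtain ⟨h0, h1⟩ := hθ
    have hpi := Real.pi_pos
    have h00 : (!![c^2, s * c; s * c, s^2] : Matrix (Fin 2) (Fin 2) ℝ) 0 0 = c^2 := by simp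
    have h01 : (!![c^2, s * c; s * c, s^2] : Matrix (Fin 2) (Fin 2) ℝ) 0 1 = s * c := by simp
    have h11 : (!![c^2, s * c; s * c, s^2] : Matrix (Fin 2) (Fin 2) ℝ) 1 1 = s^2 := by simp
    refine ⟨⟨h0, by linarith⟩, q, hq.le,
      !![c^2, s * c; s * c, s^2], ⟨?_, ?_, ?_, ?_⟩, ?_⟩
    · rw [h00, abs_of_nonneg (sq_nonneg c)]; nlinarith
    · rw [h11, abs_of_nonneg (sq_nonneg s)]; nlinarith
    · rw [h00, h11]; nlinarith
    · rw [h01]; positivity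
    · rw [kQ1_eq]

lemma formNorm_eq {q θ : ℝ} (hq : 0 < q) (hθ : θ ∈ Set.Ico 0 (π/2)) :
    formNorm (congrAct (kRot θ) !![q, 0; 0, 0]) = q * Real.cos (θ/2)^2 := by
  obtain ⟨hs0, hsc⟩ := half_facts hθ
  have hc0 : 0 < Real.cos (θ/2) := lt_of_le_of_lt hs0 hsc
  set c := Real.cos (θ/2) with hcdef
  set s := Real.sin (θ/2) with hsdef
  have h00 : (congrAct (kRot θ) !![q, 0; 0, 0]) 0 0 = q * c^2 := by rw [kQ1_eq]; simp [hcdef]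
  have h01 : (congrAct (kRot θ) !![q, 0; 0, 0]) 0 1 = q * (s * c) := by rw [kQ1_eq]; simp [hcdef, hsdef]
  have h11 : (congrAct (kRot θ) !![q, 0; 0, 0]) 1 1 = q * s^2 := by rw [kQ1_eq]; simp [hsdef]
  rw [formNorm, h00, h01, h11]
  rw [abs_of_nonneg (by positivity : (0:ℝ) ≤ q * c^2),
    abs_of_nonneg (by positivity : (0:ℝ) ≤ 2 * (q * (s * c))),
    abs_of_nonneg (by positivity : (0:ℝ) ≤ q * s^2)]
  exact max_eq_left (max_le
    (by nlinarith [mul_lt_mul_of_pos_left hsc (mul_pos hq hc0),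
      mul_nonneg (mul_nonneg hq.le hs0) hc0.le])
    (by nlinarith [mul_lt_mul_of_pos_left hsc (mul_pos hq hc0),
      mul_le_mul_of_nonneg_left hsc.le (mul_nonneg hq.le hs0)]))

/-! ### Explicit integrals -/

lemma cos_half_pos {θ : ℝ} (hθ : θ ∈ Set.Icc 0 (π/2)) : 0 < Real.cos (θ/2) := by
  have hpi := Real.pi_pos
  obtain ⟨h0, h1⟩ := hθ
  exact Real.cos_pos_of_mem_Ioo ⟨by linarith, by linarith⟩

lemma int_inv_cos_sq (q : ℝ) (hq : 0 < q) :
    ∫ θ in Set.Ico 0 (π/2), (q * Real.cos (θ/2)^2)⁻¹ = 2 / q := by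
  have hpi := Real.pi_pos
  rw [MeasureTheory.setIntegral_congr_set MeasureTheory.Ico_ae_eq_Ioc,
    ← intervalIntegral.integral_of_le (by linarith)]
  have hderiv : ∀ x ∈ Set.uIcc 0 (π/2),
      HasDerivAt (fun θ : ℝ => 2 / q * Real.tan (θ/2)) ((q * Real.cos (x/2)^2)⁻¹) x := by
    intro x hx
    rw [Set.uIcc_of_le (by linarith : (0:ℝ) ≤ π/2)] at hx
    have hc := cos_half_pos hx
    have h1 : HasDerivAt (fun θ : ℝ => θ/2) (1/2) x := (hasDerivAt_id x).div_const 2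
    have h2 := (Real.hasDerivAt_tan hc.ne').comp x h1
    have h3 := h2.const_mul (2/q)
    refine h3.congr_deriv ?_
    field_simp
  have hcont : ContinuousOn (fun x : ℝ => (q * Real.cos (x/2)^2)⁻¹) (Set.uIcc 0 (π/2)) := by
    apply ContinuousOn.inv₀
    · fun_prop
    · intro x hx
      rw [Set.uIcc_of_le (by linarith : (0:ℝ) ≤ π/2)] at hx
      have hc := cos_half_pos hx
      positivity
  rw [intervalIntegral.integral_eq_sub_of_hasDerivAt hderiv hcont.intervalIntegrable]
  rw [show π/2/2 = π/4 by ring, Real.tan_pi_div_four]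
  norm_num

lemma int_one_add_cos : ∫ θ in Set.Ico 0 (π/2), (1 + Real.cos θ)⁻¹ = 1 := by
  have hpi := Real.pi_pos
  rw [MeasureTheory.setIntegral_congr_set MeasureTheory.Ico_ae_eq_Ioc,
    ← intervalIntegral.integral_of_le (by linarith)]
  have key : ∀ x ∈ Set.Icc 0 (π/2), (1 + Real.cos x) = 2 * Real.cos (x/2)^2 := by
    intro x _
    have h2 := Real.cos_two_mul (x/2)
    rw [show 2 * (x/2) = x by ring] at h2
    rw [h2]; ring
  have hderiv : ∀ x ∈ Set.uIcc 0 (π/2),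
      HasDerivAt (fun θ : ℝ => Real.tan (θ/2)) ((1 + Real.cos x)⁻¹) x := by
    intro x hx
    rw [Set.uIcc_of_le (by linarith : (0:ℝ) ≤ π/2)] at hx
    have hc := cos_half_pos hx
    have h1 : HasDerivAt (fun θ : ℝ => θ/2) (1/2) x := (hasDerivAt_id x).div_const 2
    have h2 := (Real.hasDerivAt_tan hc.ne').comp x h1
    refine h2.congr_deriv ?_
    rw [key x hx]
    field_simp
  have hcont : ContinuousOn (fun x : ℝ => (1 + Real.cos x)⁻¹) (Set.uIcc 0 (π/2)) := by
    apply ContinuousOn.inv₀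
    · fun_prop
    · intro x hx
      rw [Set.uIcc_of_le (by linarith : (0:ℝ) ≤ π/2)] at hx
      have := key x hx
      have hc := cos_half_pos hx
      nlinarith
  rw [intervalIntegral.integral_eq_sub_of_hasDerivAt hderiv hcont.intervalIntegrable]
  rw [show π/2/2 = π/4 by ring, Real.tan_pi_div_four]
  norm_num

/-! ### Dominated convergence -/

lemma tendsto_G : Filter.Tendsto (fun S : ℝ => ∫ θ in Set.Ico 0 (π/2), u0 (Real.cos θ) S / S)
    Filter.atTop (nhds 1) := by
  have key := MeasureTheory.tendsto_integral_filter_of_dominated_convergence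
    (μ := (volume : Measure ℝ).restrict (Set.Ico 0 (π/2)))
    (l := Filter.atTop)
    (F := fun (S : ℝ) (θ : ℝ) => u0 (Real.cos θ) S / S)
    (f := fun θ => (1 + Real.cos θ)⁻¹)
    (bound := fun _ => 1)
    ?_ ?_ ?_ ?_
  · rwa [int_one_add_cos] at key
  · filter_upwards with S
    exact ((measurable_u0cos S).div_const S).aestronglyMeasurable
  · filter_upwards [Filter.eventually_ge_atTop (1:ℝ)] with S hS
    rw [MeasureTheory.ae_restrict_iff' measurableSet_Ico]
    filter_upwards with θ hθ
    obtain ⟨hc0, hc1⟩ := cos_window hθ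
    have h1 := u0_nonneg hc0 hc1 hS
    have h2 := u0_le hc0 hc1 hS
    have hS0 : (0:ℝ) < S := by linarith
    rw [Real.norm_eq_abs, abs_of_nonneg (div_nonneg h1 hS0.le)]
    rw [div_le_one hS0]
    exact h2
  · have : IntegrableOn (fun _ : ℝ => (1:ℝ)) (Set.Ico 0 (π/2)) volume := by
      exact MeasureTheory.integrableOn_const (by rw [Real.volume_Ico]; exact ENNReal.ofReal_ne_top)
    exact this
  · rw [MeasureTheory.ae_restrict_iff' measurableSet_Ico]
    filter_upwards with θ hθ
    obtain ⟨hc0, hc1⟩ := cos_window hθ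
    exact tendsto_u0_div hc0 hc1

/-- **Proposition 9.** Let `n` be a positive perfect square, `Q = [√n, 0, -√n]` and
`Q₁ = [√n, 0, 0]` its highest-weight component, and
`Θ = {θ ∈ [0, 2π) : k(θ)·Q₁ ∈ ⋃_{r ≥ 0} r F₁}`. Then, as `T → ∞`,
`∬_{{(θ,t) : k(θ)a(t)·Q ∈ F_T}} (cosh t)/4 dθ dt ∼ (T/4) ∫_Θ ‖k(θ)·Q₁‖⁻¹ dθ`. -/
theorem volume_eq_theta_integral_split (n : ℤ) (hn : 0 < n) (hsq : ∃ m : ℤ, n = m ^ 2) :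
    Filter.Tendsto
      (fun T : ℝ =>
        (∫ p in {p : ℝ × ℝ | p.1 ∈ Set.Ico 0 (2 * Real.pi) ∧
              congrAct (kRot p.1 * aDiag p.2)
                (!![Real.sqrt (n : ℝ), 0; 0, -Real.sqrt (n : ℝ)]) ∈ FTregion T},
            Real.cosh p.2 / 4) /
          ((T / 4) *
            ∫ θ in {θ : ℝ | θ ∈ Set.Ico 0 (2 * Real.pi) ∧
                ∃ r : ℝ, 0 ≤ r ∧ ∃ M ∈ FTregion 1,
                  congrAct (kRot θ) (!![Real.sqrt (n : ℝ), 0; 0, 0]) = r • M},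
              (formNorm (congrAct (kRot θ) (!![Real.sqrt (n : ℝ), 0; 0, 0])))⁻¹))
      Filter.atTop (nhds 1) := by
  set q : ℝ := Real.sqrt (n : ℝ) with hqdef
  have hq : 0 < q := Real.sqrt_pos.2 (by exact_mod_cast hn)
  -- the denominator integral
  have hden : (∫ θ in {θ : ℝ | θ ∈ Set.Ico 0 (2 * Real.pi) ∧
      ∃ r : ℝ, 0 ≤ r ∧ ∃ M ∈ FTregion 1,
        congrAct (kRot θ) (!![q, 0; 0, 0]) = r • M},
      (formNorm (congrAct (kRot θ) (!![q, 0; 0, 0])))⁻¹) = 2 / q := by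
    rw [theta_set_eq q hq]
    rw [MeasureTheory.setIntegral_congr_fun measurableSet_Ico
      (fun θ hθ => by rw [formNorm_eq hq hθ])]
    exact int_inv_cos_sq q hq
  -- the composed limit
  have hcomp : Filter.Tendsto
      (fun T : ℝ => ∫ θ in Set.Ico 0 (π/2), u0 (Real.cos θ) (T/q) / (T/q))
      Filter.atTop (nhds 1) := by
    apply tendsto_G.comp
    exact Filter.Tendsto.atTop_div_const hq Filter.tendsto_id
  apply hcomp.congr'
  filter_upwards [Filter.eventually_ge_atTop q, Filter.eventually_gt_atTop (0:ℝ)] with T hTq hT0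
  have hS1 : 1 ≤ T / q := (one_le_div hq).2 hTq
  rw [hden, set_eq q T hq hS1, N_eq (T/q) hS1]
  rw [MeasureTheory.integral_div, MeasureTheory.integral_div]
  have hq0 : q ≠ 0 := hq.ne'
  have hT0' : T ≠ 0 := hT0.ne'
  field_simp
  ring
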